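/- Let X, Y be Banach spaces and P a metric space, and let H : X × P →→ Y be inner semicontinuous at (x̄,p̄,0) ∈ Gr H and open with linear rate c > 0 with respect to x uniformly in p around (x̄,p̄,0). Then there exist r̄, t̄ > 0 such that for every (x,p) ∈ B(x̄,r̄) × B(p̄,t̄), d((p,x), Gr S) ≤ (1 + c⁻¹) · d((x,p,0), Gr H), where S(p) = {x : 0 ∈ H(x,p)}, Gr S ⊆ P × X, Gr H ⊆ X × P × Y, and all product spaces carry sum metrics. -/

import Mathlib

open Metric

/-- Graphical regularity from uniform linear openness: if `P` is a metric space and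
`H` is inner semicontinuous at `(x₀,p₀,0)` and open at linear rate `c > 0` with respect
to `x` uniformly in `p` around `(x₀,p₀,0)`, then
`d((p,x), Gr S) ≤ (1 + c⁻¹)·d((x,p,0), Gr H)` near `(x₀,p₀)`, where `S(p) = {x | 0 ∈ H(x,p)}`
and the graph distances are taken with respect to sum metrics (with value `∞` for `∅`). -/
theorem graphical_regularity_from_uniform_openness
    {X Y P : Type*} [NormedAddCommGroup X] [NormedSpace ℝ X] [CompleteSpace X]
    [NormedAddCommGroup Y] [NormedSpace ℝ Y] [CompleteSpace Y] [MetricSpace P]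
    (H : X → P → Set Y) (x₀ : X) (p₀ : P) (c : ℝ) (hc : 0 < c)
    (hgr : (0 : Y) ∈ H x₀ p₀)
    (hisc : ∀ D : Set Y, IsOpen D → (0 : Y) ∈ D →
      ∃ U ∈ nhds x₀, ∃ V ∈ nhds p₀, ∀ x ∈ U, ∀ p ∈ V, (H x p ∩ D).Nonempty)
    (hopen : ∃ ε > 0, ∃ U ∈ nhds x₀, ∃ V ∈ nhds p₀, ∃ W ∈ nhds (0 : Y),
      ∀ ρ : ℝ, 0 < ρ → ρ < ε → ∀ p ∈ V, ∀ x ∈ U, ∀ y ∈ W, y ∈ H x p →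
        ball y (ρ * c) ⊆ ⋃ u ∈ ball x ρ, H u p) :
    ∃ r₁ > 0, ∃ t₁ > 0, ∀ x ∈ ball x₀ r₁, ∀ p ∈ ball p₀ t₁,
      (⨅ z : {z : P × X // 0 ∈ H z.2 z.1}, (edist p z.1.1 + edist x z.1.2)) ≤
        ENNReal.ofReal (1 + c⁻¹) *
          ⨅ w : {w : X × P × Y // w.2.2 ∈ H w.1 w.2.1},
            (edist x w.1.1 + edist p w.1.2.1 + edist (0 : Y) w.1.2.2) := by
  obtain ⟨ε, hε, U, hU, V, hV, W, hW, hop⟩ := hopen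
  obtain ⟨rU, hrU, hUb⟩ := Metric.mem_nhds_iff.mp hU
  obtain ⟨rV, hrV, hVb⟩ := Metric.mem_nhds_iff.mp hV
  obtain ⟨rW, hrW, hWb⟩ := Metric.mem_nhds_iff.mp hW
  set m : ℝ := min (min (rU / 4) (rV / 4)) (min (rW / 4) (ε * c / (c + 3) / 2)) with hmdef
  have hm0 : 0 < m := by
    have h5 : 0 < ε * c / (c + 3) / 2 := by positivity
    simp only [hmdef, lt_min_iff]
    exact ⟨⟨by linarith, by linarith⟩, ⟨by linarith, h5⟩⟩
  have hmU : m ≤ rU / 4 := le_trans (min_le_left _ _) (min_le_left _ _)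
  have hmV : m ≤ rV / 4 := le_trans (min_le_left _ _) (min_le_right _ _)
  have hmW : m ≤ rW / 4 := le_trans (min_le_right _ _) (min_le_left _ _)
  have hmε : m ≤ ε * c / (c + 3) / 2 := le_trans (min_le_right _ _) (min_le_right _ _)
  have hmε' : m * 2 * (c + 3) ≤ ε * c := by
    have h := hmε
    rw [le_div_iff₀ (by norm_num : (0:ℝ) < 2)] at h
    rw [le_div_iff₀ (by linarith : (0:ℝ) < c + 3)] at h
    exact h
  clear_value m
  refine ⟨m, hm0, m, hm0, ?_⟩
  intro x hx p hp
  have hxd : dist x x₀ < m := mem_ball.mp hx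
  have hpd : dist p p₀ < m := mem_ball.mp hp
  set D : ENNReal := ⨅ w : {w : X × P × Y // w.2.2 ∈ H w.1 w.2.1},
      (edist x w.1.1 + edist p w.1.2.1 + edist (0 : Y) w.1.2.2) with hD
  clear_value D
  have hDle : D ≤ ENNReal.ofReal (dist x x₀ + dist p p₀) := by
    have h1 : D ≤ edist x x₀ + edist p p₀ + edist (0 : Y) (0 : Y) := by
      rw [hD]
      exact iInf_le (fun w : {w : X × P × Y // w.2.2 ∈ H w.1 w.2.1} =>
        edist x w.1.1 + edist p w.1.2.1 + edist (0 : Y) w.1.2.2) ⟨(x₀, p₀, 0), hgr⟩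
    simpa [edist_dist, ← ENNReal.ofReal_add, dist_nonneg] using h1
  have hDlt : D < ⊤ := lt_of_le_of_lt hDle ENNReal.ofReal_lt_top
  set d : ℝ := D.toReal with hddef
  have hd0 : 0 ≤ d := ENNReal.toReal_nonneg
  have hDd : ENNReal.ofReal d = D := ENNReal.ofReal_toReal hDlt.ne
  have hd2m : d < 2 * m := by
    have h1 : D < ENNReal.ofReal (2 * m) :=
      lt_of_le_of_lt hDle ((ENNReal.ofReal_lt_ofReal_iff (by positivity)).mpr (by linarith))
    exact (ENNReal.lt_ofReal_iff_toReal_lt hDlt.ne).mp h1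
  clear_value d
  apply ENNReal.le_of_forall_pos_le_add
  intro η hη _
  have hηR : (0 : ℝ) < (η : ℝ) := hη
  have hci : (0 : ℝ) < c⁻¹ := by positivity
  have hK : (0 : ℝ) < 1 + c⁻¹ := by linarith
  set t : ℝ := min ((η : ℝ) / (2 * (1 + c⁻¹))) (m / 2) with htdef
  have ht0 : 0 < t := lt_min (by positivity) (by positivity)
  have htm : t ≤ m / 2 := min_le_right _ _
  have htη : t ≤ (η : ℝ) / (2 * (1 + c⁻¹)) := min_le_left _ _
  clear_value t
  -- get a near-optimal graph point
  have hwit : ∃ w : {w : X × P × Y // w.2.2 ∈ H w.1 w.2.1},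
      edist x w.1.1 + edist p w.1.2.1 + edist (0 : Y) w.1.2.2 < D + ENNReal.ofReal t := by
    by_contra h
    push_neg at h
    have h1 : D + ENNReal.ofReal t ≤ D := by
      conv_rhs => rw [hD]
      exact le_iInf h
    have h2 : D < D + ENNReal.ofReal t :=
      ENNReal.lt_add_right hDlt.ne (by simp only [ne_eq, ENNReal.ofReal_eq_zero, not_le]; linarith)
    exact absurd h1 (not_le_of_gt h2)
  obtain ⟨⟨⟨x', p', y'⟩, hmem⟩, hwlt⟩ := hwit
  have hmem' : y' ∈ H x' p' := hmem
  have hwlt' : edist x x' + edist p p' + edist (0 : Y) y' < D + ENNReal.ofReal t := hwlt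
  have habe : dist x x' + dist p p' + dist (0 : Y) y' < d + t := by
    rw [edist_dist, edist_dist, edist_dist, ← ENNReal.ofReal_add dist_nonneg dist_nonneg,
      ← ENNReal.ofReal_add (by positivity) dist_nonneg, ← hDd,
      ← ENNReal.ofReal_add hd0 ht0.le] at hwlt'
    exact (ENNReal.ofReal_lt_ofReal_iff_of_nonneg (by positivity)).mp hwlt'
  set a : ℝ := dist x x' with hadef
  set b : ℝ := dist p p' with hbdef
  set e : ℝ := dist (0 : Y) y' with hedef
  have ha0 : 0 ≤ a := dist_nonneg
  have hb0 : 0 ≤ b := dist_nonneg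
  have he0 : 0 ≤ e := dist_nonneg
  clear_value a b e
  have hx' : x' ∈ U := by
    apply hUb
    have h1 : dist x' x₀ ≤ a + dist x x₀ := by
      rw [hadef, dist_comm x x']; exact dist_triangle _ _ _
    exact mem_ball.mpr (by linarith)
  have hp' : p' ∈ V := by
    apply hVb
    have h1 : dist p' p₀ ≤ b + dist p p₀ := by
      rw [hbdef, dist_comm p p']; exact dist_triangle _ _ _
    exact mem_ball.mpr (by linarith)
  have hy' : y' ∈ W := by
    apply hWb
    have h1 : dist y' 0 = e := by rw [hedef, dist_comm]
    exact mem_ball.mpr (by linarith)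
  set ρ : ℝ := e / c + t with hρdef
  have hρ0 : 0 < ρ := by positivity
  clear_value ρ
  have hρε : ρ < ε := by
    have he3 : e < 3 * m := by linarith
    have h1 : e / c < 3 * m / c := by gcongr
    have h2 : 3 * m / c + m ≤ ε := by
      rw [div_add' _ _ _ hc.ne', div_le_iff₀ hc]
      nlinarith [mul_nonneg hm0.le hc.le]
    rw [hρdef]
    linarith
  have h0mem : (0 : Y) ∈ ball y' (ρ * c) := by
    rw [mem_ball, ← hedef]
    have hρc : ρ * c = e + t * c := by rw [hρdef]; field_simp
    rw [hρc]
    nlinarith [mul_pos ht0 hc]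
  have hun := hop ρ hρ0 hρε p' hp' x' hx' y' hy' hmem' h0mem
  simp only [Set.mem_iUnion, mem_ball] at hun
  obtain ⟨u, hu_ball, hu_mem⟩ := hun
  have hL : (⨅ z : {z : P × X // 0 ∈ H z.2 z.1}, (edist p z.1.1 + edist x z.1.2)) ≤
      edist p p' + edist x u := iInf_le (fun z : {z : P × X // 0 ∈ H z.2 z.1} => edist p z.1.1 + edist x z.1.2) ⟨(p', u), hu_mem⟩
  have hxu : dist x u < a + ρ := by
    have h1 : dist x u ≤ a + dist x' u := by rw [hadef]; exact dist_triangle _ _ _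
    have h2 : dist x' u < ρ := by rw [dist_comm]; exact hu_ball
    linarith
  have key : b + a + e * c⁻¹ + t ≤ (1 + c⁻¹) * d + η := by
    have hKmul : (1 + c⁻¹) * (a + b + e) ≤ (1 + c⁻¹) * (d + t) :=
      mul_le_mul_of_nonneg_left habe.le hK.le
    have h2K : 2 * (1 + c⁻¹) * t ≤ η := by
      rw [le_div_iff₀ (by positivity)] at htη
      linarith
    linarith [hKmul, h2K, mul_nonneg hci.le ha0, mul_nonneg hci.le hb0,
      mul_nonneg hci.le he0, mul_nonneg hci.le ht0.le, mul_nonneg hci.le hd0]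
  have hfinal : b + (a + ρ) ≤ (1 + c⁻¹) * d + η := by
    have heq : b + (a + ρ) = b + a + e * c⁻¹ + t := by
      rw [hρdef, div_eq_mul_inv]; ring
    rw [heq]; exact key
  calc (⨅ z : {z : P × X // 0 ∈ H z.2 z.1}, (edist p z.1.1 + edist x z.1.2))
      ≤ edist p p' + edist x u := hL
    _ ≤ ENNReal.ofReal (b + (a + ρ)) := by
        rw [edist_dist, edist_dist, ← hbdef, ← ENNReal.ofReal_add hb0 dist_nonneg]
        exact ENNReal.ofReal_le_ofReal (add_le_add_right hxu.le b)
    _ ≤ ENNReal.ofReal ((1 + c⁻¹) * d + η) := ENNReal.ofReal_le_ofReal hfinal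
    _ = ENNReal.ofReal (1 + c⁻¹) * D + η := by
        rw [ENNReal.ofReal_add (mul_nonneg hK.le hd0) hηR.le, ENNReal.ofReal_mul hK.le, hDd,
          ENNReal.ofReal_coe_nnreal]
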